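/- Let K be a field of characteristic zero, let q ∈ K[X] be a nonzero polynomial, and let M ∈ M_n(K(X)) be such that qM has polynomial entries of degree at most d, with deg(q) ≤ d. Let u ∈ K[X]^n be a row vector with polynomial entries. Then for every k ≥ 0, the row vector q^k δ^k(u) has polynomial entries, of degree at most deg(u) + k·d, where deg(u) is the maximum of the degrees of the entries of u. -/

import Mathlib

/-- `δ(u) = u M + u′` for a row vector `u`, the derivation `der` being applied
entrywise. -/
def cvDelta {F : Type*} [Field F] {n : ℕ} (der : F → F)
    (M : Matrix (Fin n) (Fin n) F) (u : Fin n → F) : Fin n → F :=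
  Matrix.vecMul u M + fun i => der (u i)

lemma der_algebraMap {K : Type*} [Field K] (der : RatFunc K → RatFunc K)
    (h_add : ∀ a b : RatFunc K, der (a + b) = der a + der b)
    (h_mul : ∀ a b : RatFunc K, der (a * b) = a * der b + der a * b)
    (h_X : der RatFunc.X = 1)
    (h_C : ∀ c : K, der (RatFunc.C c) = 0)
    (r : Polynomial K) :
    der (algebraMap (Polynomial K) (RatFunc K) r)
      = algebraMap (Polynomial K) (RatFunc K) r.derivative := by
  induction r using Polynomial.induction_on with
  | C a => simp [RatFunc.algebraMap_C, h_C]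
  | add p q hp hq => simp [map_add, h_add, hp, hq]
  | monomial m a ih =>
    have key : (Polynomial.C a * Polynomial.X ^ (m + 1) : Polynomial K)
        = (Polynomial.C a * Polynomial.X ^ m) * Polynomial.X := by ring
    rw [key, map_mul, h_mul, ih, RatFunc.algebraMap_X, h_X, mul_one]
    simp only [Polynomial.derivative_mul, Polynomial.derivative_X, Polynomial.derivative_C,
      map_add, map_mul, RatFunc.algebraMap_X, mul_one, zero_mul, zero_add, map_zero]
    ring

/-- If `q M` has polynomial entries of degree `≤ d` with `deg q ≤ d` and `u` is a
row vector of polynomials, then `q^k δ^k(u)` has polynomial entries of degree at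
most `deg u + k d`.  Here `der` is the derivation of `K(X)` extending `d/dX`. -/
theorem qk_deltak_polynomial_degree {K : Type*} [Field K] [CharZero K] {n : ℕ}
    (der : RatFunc K → RatFunc K)
    (h_add : ∀ a b : RatFunc K, der (a + b) = der a + der b)
    (h_mul : ∀ a b : RatFunc K, der (a * b) = a * der b + der a * b)
    (h_X : der RatFunc.X = 1)
    (h_C : ∀ c : K, der (RatFunc.C c) = 0)
    (q : Polynomial K) (hq : q ≠ 0) (d : ℕ) (hqd : q.degree ≤ (d : WithBot ℕ))
    (M : Matrix (Fin n) (Fin n) (RatFunc K))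
    (hM : ∀ i j : Fin n, ∃ p : Polynomial K, p.degree ≤ (d : WithBot ℕ) ∧
      algebraMap (Polynomial K) (RatFunc K) q * M i j
        = algebraMap (Polynomial K) (RatFunc K) p)
    (u : Fin n → Polynomial K) (k : ℕ) :
    ∀ j : Fin n, ∃ p : Polynomial K,
      p.degree ≤ (((Finset.univ.sup fun l => (u l).natDegree) + k * d : ℕ) : WithBot ℕ) ∧
      (algebraMap (Polynomial K) (RatFunc K) q) ^ k *
        (cvDelta der M)^[k] (fun l => algebraMap (Polynomial K) (RatFunc K) (u l)) j
        = algebraMap (Polynomial K) (RatFunc K) p := by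
  set A := algebraMap (Polynomial K) (RatFunc K) with hA
  set D := Finset.univ.sup fun l => (u l).natDegree with hD
  choose m hmdeg hm using hM
  induction k with
  | zero =>
    intro j
    refine ⟨u j, ?_, by simp⟩
    simp only [Nat.zero_mul, Nat.add_zero]
    refine (Polynomial.degree_le_natDegree).trans (Nat.cast_le.mpr ?_)
    rw [hD]
    exact Finset.le_sup (f := fun l => (u l).natDegree) (Finset.mem_univ j)
  | succ k ih =>
    choose p hdeg hp using ih
    intro j
    set w := (cvDelta der M)^[k] (fun l => A (u l)) with hw
    refine ⟨(∑ l, p l * m l j) +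
      ((q * p j).derivative - Polynomial.C ((k + 1 : ℕ) : K) * q.derivative * p j), ?_, ?_⟩
    · -- degree bound
      have hcast : ((D + (k + 1) * d : ℕ) : WithBot ℕ)
          = ((D + k * d : ℕ) : WithBot ℕ) + (d : WithBot ℕ) := by
        rw [← Nat.cast_add]; congr 1; ring
      rw [hcast]
      refine le_trans (Polynomial.degree_add_le _ _) (max_le ?_ ?_)
      · refine le_trans (Polynomial.degree_sum_le _ _) (Finset.sup_le fun l _ => ?_)
        exact le_trans (Polynomial.degree_mul_le _ _) (add_le_add (hdeg l) (hmdeg l j))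
      · refine le_trans (Polynomial.degree_sub_le _ _) (max_le ?_ ?_)
        · refine le_trans (Polynomial.degree_derivative_le) ?_
          refine le_trans (Polynomial.degree_mul_le _ _) ?_
          rw [add_comm ((D + k * d : ℕ) : WithBot ℕ) (d : WithBot ℕ)]
          exact add_le_add hqd (hdeg j)
        · refine le_trans (Polynomial.degree_mul_le _ _) ?_
          refine le_trans (add_le_add (Polynomial.degree_mul_le _ _) (hdeg j)) ?_
          refine le_trans (add_le_add_left (add_le_add Polynomial.degree_C_le
            (Polynomial.degree_derivative_le.trans hqd)) _) ?_
          rw [zero_add, add_comm ((D + k * d : ℕ) : WithBot ℕ) (d : WithBot ℕ)]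
    · -- the identity
      rw [Function.iterate_succ_apply', ← hw]
      have hcv : cvDelta der M w j = Matrix.vecMul w M j + der (w j) := rfl
      have hterm1 : A q ^ (k + 1) * Matrix.vecMul w M j = A (∑ l, p l * m l j) := by
        simp only [Matrix.vecMul, dotProduct]
        rw [Finset.mul_sum, map_sum]
        refine Finset.sum_congr rfl fun l _ => ?_
        calc A q ^ (k + 1) * (w l * M l j) = (A q ^ k * w l) * (A q * M l j) := by ring
          _ = A (p l) * A (m l j) := by rw [hp l, hm l j]
          _ = A (p l * m l j) := by rw [map_mul]
      have e1 : A q ^ (k + 1) * w j = A (q * p j) := by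
        calc A q ^ (k + 1) * w j = A q * (A q ^ k * w j) := by ring
          _ = A q * A (p j) := by rw [hp j]
          _ = A (q * p j) := by rw [map_mul]
      have hmain := h_mul (A q ^ (k + 1)) (w j)
      rw [e1, der_algebraMap der h_add h_mul h_X h_C] at hmain
      have e3 : der (A q ^ (k + 1)) * w j
          = A (Polynomial.C ((k + 1 : ℕ) : K) * q.derivative * p j) := by
        rw [show A q ^ (k + 1) = A (q ^ (k + 1)) from (map_pow A q (k + 1)).symm,
          der_algebraMap der h_add h_mul h_X h_C, Polynomial.derivative_pow]
        simp only [Nat.add_sub_cancel, map_mul, map_pow]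
        calc A (Polynomial.C ((k + 1 : ℕ) : K)) * A q ^ k * A q.derivative * w j
            = A (Polynomial.C ((k + 1 : ℕ) : K)) * A q.derivative * (A q ^ k * w j) := by ring
          _ = A (Polynomial.C ((k + 1 : ℕ) : K)) * A q.derivative * A (p j) := by rw [hp j]
      have e2 : A q ^ (k + 1) * der (w j)
          = A ((q * p j).derivative - Polynomial.C ((k + 1 : ℕ) : K) * q.derivative * p j) := by
        rw [map_sub]
        linear_combination -hmain - e3
      rw [hcv, mul_add, hterm1, e2, ← map_add]
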